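/- Let G be a graph and ℓ : V(G) → ℤ a function with ∑_{v ∈ V(G)} ℓ(v) = 0 and ℓ(v) ≡ d_G(v) (mod 2) for all v. Then G has an orientation D with d⁺_D(v) − d⁻_D(v) = ℓ(v) for all v if and only if |∑_{v ∈ S} ℓ(v)| ≤ |∂_G(S)| for every subset S of V(G), where ∂_G(S) is the set of edges with exactly one endpoint in S. -/

import Mathlib

/-- A finite loopless multigraph: each edge has an ordered pair of distinct endpoints
(the ordering is immaterial; it is only used to describe orientations). -/
structure Multigraph : Type 1 where
  V : Type
  fintypeV : Fintype V
  decEqV : DecidableEq V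
  E : Type
  fintypeE : Fintype E
  decEqE : DecidableEq E
  ends : E → V × V
  loopless : ∀ e, (ends e).1 ≠ (ends e).2

attribute [instance] Multigraph.fintypeV Multigraph.decEqV Multigraph.fintypeE Multigraph.decEqE

namespace Multigraph

variable (G : Multigraph)

/-- Tail of an edge under an orientation `D` (`true` = directed from first to second end). -/
def tail (D : G.E → Bool) (e : G.E) : G.V := if D e then (G.ends e).1 else (G.ends e).2

/-- Head of an edge under an orientation `D`. -/
def head (D : G.E → Bool) (e : G.E) : G.V := if D e then (G.ends e).2 else (G.ends e).1

/-- Out-degree of `v` under orientation `D`. -/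
def outDeg (D : G.E → Bool) (v : G.V) : ℕ := (Finset.univ.filter fun e => G.tail D e = v).card

/-- In-degree of `v` under orientation `D`. -/
def inDeg (D : G.E → Bool) (v : G.V) : ℕ := (Finset.univ.filter fun e => G.head D e = v).card

/-- A modulo 3-orientation. -/
def HasMod3Orientation : Prop :=
  ∃ D : G.E → Bool, ∀ v : G.V, ((G.outDeg D v : ZMod 3) = (G.inDeg D v : ZMod 3))

/-- A nowhere-zero 3-flow. -/
def HasNowhereZero3Flow : Prop :=
  ∃ (D : G.E → Bool) (f : G.E → ℤ),
    (∀ e, 1 ≤ |f e| ∧ |f e| ≤ 2) ∧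
    (∀ v : G.V,
      (∑ e : G.E, if G.tail D e = v then f e else 0) =
      (∑ e : G.E, if G.head D e = v then f e else 0))

/-- `ℤ₃`-connectivity. -/
def Z3Connected : Prop :=
  ∀ b : G.V → ZMod 3, (∑ v : G.V, b v) = 0 →
    ∃ D : G.E → Bool, ∀ v : G.V, (G.outDeg D v : ZMod 3) - (G.inDeg D v : ZMod 3) = b v

/-- Degree of a vertex. -/
def degree (v : G.V) : ℕ :=
  (Finset.univ.filter fun e => (G.ends e).1 = v ∨ (G.ends e).2 = v).card

/-- Minimum degree `δ(G)`. -/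
noncomputable def minDegree : ℕ := sInf (Set.range G.degree)

/-- The edge cut `∂_G(S)`. -/
def cut (S : Finset G.V) : Finset G.E :=
  Finset.univ.filter fun e =>
    ((G.ends e).1 ∈ S ∧ (G.ends e).2 ∉ S) ∨ ((G.ends e).2 ∈ S ∧ (G.ends e).1 ∉ S)

def Adjacent (u v : G.V) : Prop :=
  ∃ e : G.E, G.ends e = (u, v) ∨ G.ends e = (v, u)

def IsIndepSet (S : Finset G.V) : Prop :=
  ∀ u ∈ S, ∀ v ∈ S, u ≠ v → ¬ G.Adjacent u v

/-- The independence number `α(G)`. -/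
noncomputable def indepNum : ℕ := sSup {n : ℕ | ∃ S : Finset G.V, G.IsIndepSet S ∧ S.card = n}

def FiveEdgeConnected : Prop :=
  ∀ S : Finset G.V, S.Nonempty → S ≠ Finset.univ → 5 ≤ (G.cut S).card

/-- Every odd edge cut has at least 5 edges. -/
def Odd5EdgeConnected : Prop :=
  ∀ S : Finset G.V, Odd (G.cut S).card → 5 ≤ (G.cut S).card

/-- `G` contains `K₄` as a subgraph. -/
def ContainsK4 : Prop :=
  ∃ a b c d : G.V, a ≠ b ∧ a ≠ c ∧ a ≠ d ∧ b ≠ c ∧ b ≠ d ∧ c ≠ d ∧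
    G.Adjacent a b ∧ G.Adjacent a c ∧ G.Adjacent a d ∧
    G.Adjacent b c ∧ G.Adjacent b d ∧ G.Adjacent c d

/-- The neighbourhood `N(X)`: vertices outside `X` with a neighbour in `X`. -/
noncomputable def neighborFinset (X : Finset G.V) : Finset G.V := by
  classical
  exact Finset.univ.filter fun y => y ∉ X ∧ ∃ x ∈ X, G.Adjacent x y

/-- Induced subgraph on a vertex set `S`. -/
def induce (S : Finset G.V) : Multigraph where
  V := {v // v ∈ S}
  fintypeV := inferInstance
  decEqV := inferInstance
  E := {e : G.E // (G.ends e).1 ∈ S ∧ (G.ends e).2 ∈ S}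
  fintypeE := inferInstance
  decEqE := inferInstance
  ends := fun e => (⟨(G.ends e.1).1, e.2.1⟩, ⟨(G.ends e.1).2, e.2.2⟩)
  loopless := fun e h => G.loopless e.1 (congrArg Subtype.val h)

/-- The relation identifying the two ends of each edge in `F`. -/
def contractRel (F : Set G.E) (x y : G.V) : Prop :=
  ∃ e ∈ F, G.ends e = (x, y) ∨ G.ends e = (y, x)

/-- Contraction of a set `F` of edges: identify endpoints of edges of `F`
(via the equivalence closure), delete the edges of `F` and all resulting loops. -/
noncomputable def contractEdges (F : Set G.E) : Multigraph := by
  classical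
  exact
    { V := Quot (G.contractRel F)
      fintypeV := Fintype.ofSurjective (Quot.mk _) (fun q => Quot.inductionOn q fun a => ⟨a, rfl⟩)
      decEqV := Classical.decEq _
      E := {e : G.E // e ∉ F ∧
            Quot.mk (G.contractRel F) (G.ends e).1 ≠ Quot.mk (G.contractRel F) (G.ends e).2}
      fintypeE := Subtype.fintype _
      decEqE := Classical.decEq _
      ends := fun e => (Quot.mk _ (G.ends e.1).1, Quot.mk _ (G.ends e.1).2)
      loopless := fun e => e.2.2 }

end Multigraph

/-- A subgraph of a multigraph. -/
structure Multigraph.Subgraph (G : Multigraph) where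
  verts : Finset G.V
  edges : Finset G.E
  ends_mem : ∀ e ∈ edges, (G.ends e).1 ∈ verts ∧ (G.ends e).2 ∈ verts

namespace Multigraph

/-- A subgraph as a multigraph in its own right. -/
def Subgraph.toMultigraph {G : Multigraph} (H : G.Subgraph) : Multigraph where
  V := {v // v ∈ H.verts}
  fintypeV := inferInstance
  decEqV := inferInstance
  E := {e // e ∈ H.edges}
  fintypeE := inferInstance
  decEqE := inferInstance
  ends := fun e => (⟨(G.ends e.1).1, (H.ends_mem e.1 e.2).1⟩, ⟨(G.ends e.1).2, (H.ends_mem e.1 e.2).2⟩)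
  loopless := fun e h => G.loopless e.1 (congrArg Subtype.val h)

/-- `G` is `⟨ℤ₃⟩`-reduced: it has no `ℤ₃`-connected subgraph with at least two vertices. -/
def Z3Reduced (G : Multigraph) : Prop :=
  ∀ H : G.Subgraph, H.toMultigraph.Z3Connected → H.verts.card ≤ 1

/-- The contraction `G/H` of a subgraph. -/
noncomputable def contractSubgraph (G : Multigraph) (H : G.Subgraph) : Multigraph :=
  G.contractEdges {e | e ∈ H.edges}

/-- The `⟨ℤ₃⟩`-reduction of `G`: contract (the edges of) all maximal `ℤ₃`-connected
subgraphs of `G`. -/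
noncomputable def reduction (G : Multigraph) : Multigraph :=
  G.contractEdges {e | ∃ H : G.Subgraph, H.toMultigraph.Z3Connected ∧ e ∈ H.edges}

end Multigraph

/-- `r(n)`: the maximum number of edges of a `⟨ℤ₃⟩`-reduced graph on `n` vertices. -/
noncomputable def edgeMaxReduced (n : ℕ) : ℕ :=
  sSup {m : ℕ | ∃ G : Multigraph, G.Z3Reduced ∧ Fintype.card G.V = n ∧ Fintype.card G.E = m}

/-- The complete graph `K_n`. -/
def completeK (n : ℕ) : Multigraph where
  V := Fin n
  fintypeV := inferInstance
  decEqV := inferInstance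
  E := {p : Fin n × Fin n // p.1 < p.2}
  fintypeE := inferInstance
  decEqE := inferInstance
  ends := fun p => p.1
  loopless := fun p => Fin.ne_of_lt p.2

private theorem fin_succ_ne {n : ℕ} (hn : 2 ≤ n) (i : Fin n)
    (hv : (i : ℕ) = ((i : ℕ) + 1) % n) : False := by
  have hi := i.isLt
  by_cases hlt : (i : ℕ) + 1 < n
  · rw [Nat.mod_eq_of_lt hlt] at hv; omega
  · have he : (i : ℕ) + 1 = n := by omega
    rw [he, Nat.mod_self] at hv; omega

/-- The cycle `C_n` (for `n ≥ 2`); `C_2` is a digon. -/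
def cycleGraph (n : ℕ) (hn : 2 ≤ n) : Multigraph where
  V := Fin n
  fintypeV := inferInstance
  decEqV := inferInstance
  E := Fin n
  fintypeE := inferInstance
  decEqE := inferInstance
  ends := fun i => (i, ⟨((i : ℕ) + 1) % n, Nat.mod_lt _ (by omega)⟩)
  loopless := fun i h => fin_succ_ne hn i (congrArg Fin.val h)

/-- The wheel `W_n` (for `n ≥ 2`): an `n`-cycle on `some 0, …, some (n-1)` together
with a center `none` joined to every vertex of the cycle. -/
def wheelGraph (n : ℕ) (hn : 2 ≤ n) : Multigraph where
  V := Option (Fin n)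
  fintypeV := inferInstance
  decEqV := inferInstance
  E := Fin n ⊕ Fin n
  fintypeE := inferInstance
  decEqE := inferInstance
  ends := fun e => match e with
    | .inl i => (some i, some ⟨((i : ℕ) + 1) % n, Nat.mod_lt _ (by omega)⟩)
    | .inr i => (none, some i)
  loopless := by
    rintro (i | i) h
    · exact fin_succ_ne hn i (congrArg Fin.val (Option.some_injective _ h))
    · cases (h : (none : Option (Fin n)) = some i)

namespace HakimiAux

open Finset

variable (G : Multigraph)

/-- Oriented incidence of edge `e` at vertex `w`. -/
def oinc (D : G.E → Bool) (e : G.E) (w : G.V) : ℤ :=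
  (if G.tail D e = w then 1 else 0) - (if G.head D e = w then 1 else 0)

/-- Net out-minus-in degree at `w`, counting only edges in `F`. -/
def netF (F : Finset G.E) (D : G.E → Bool) (w : G.V) : ℤ := ∑ e ∈ F, oinc G D e w

/-- Incidence of `e` at `w`. -/
def inc (e : G.E) (w : G.V) : ℤ :=
  (if (G.ends e).1 = w then 1 else 0) + (if (G.ends e).2 = w then 1 else 0)

/-- Degree of `w` counting only edges in `F`. -/
def degF (F : Finset G.E) (w : G.V) : ℤ := ∑ e ∈ F, inc G e w

/-- The cut of `S` restricted to edges in `F`. -/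
def cutF (F : Finset G.E) (S : Finset G.V) : Finset G.E :=
  F.filter fun e =>
    ((G.ends e).1 ∈ S ∧ (G.ends e).2 ∉ S) ∨ ((G.ends e).2 ∈ S ∧ (G.ends e).1 ∉ S)

lemma card_filter_int {α : Type} [Fintype α] [DecidableEq α] (s : Finset α)
    (p : α → Prop) [DecidablePred p] :
    ((s.filter p).card : ℤ) = ∑ e ∈ s, if p e then (1:ℤ) else 0 := by
  rw [Finset.card_filter]
  push_cast [apply_ite (Nat.cast : ℕ → ℤ)]
  rfl

lemma sum_netF (F : Finset G.E) (D : G.E → Bool) (S : Finset G.V) :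
    ∑ w ∈ S, netF G F D w =
      ∑ e ∈ F, ((if G.tail D e ∈ S then (1:ℤ) else 0) - (if G.head D e ∈ S then (1:ℤ) else 0)) := by
  unfold netF oinc
  rw [Finset.sum_comm]
  refine Finset.sum_congr rfl fun e _ => ?_
  rw [Finset.sum_sub_distrib, Finset.sum_ite_eq, Finset.sum_ite_eq]

/-- Forward direction per-set bound. -/
lemma forward_bound (F : Finset G.E) (D : G.E → Bool) (S : Finset G.V) :
    |∑ w ∈ S, netF G F D w| ≤ ((cutF G F S).card : ℤ) := by
  rw [sum_netF, cutF, card_filter_int]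
  refine le_trans (Finset.abs_sum_le_sum_abs _ _) (Finset.sum_le_sum fun e _ => ?_)
  unfold Multigraph.tail Multigraph.head
  by_cases hD : D e <;> by_cases h1 : (G.ends e).1 ∈ S <;> by_cases h2 : (G.ends e).2 ∈ S <;>
    simp [hD, h1, h2]

/-- Parity of a cut. -/
lemma cut_parity (F : Finset G.E) (ℓ : G.V → ℤ)
    (hp : ∀ w, ℓ w % 2 = degF G F w % 2) (S : Finset G.V) :
    (∑ w ∈ S, ℓ w) % 2 = ((cutF G F S).card : ℤ) % 2 := by
  have h1 : (∑ w ∈ S, ℓ w) % 2 = (∑ w ∈ S, degF G F w) % 2 := by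
    rw [Finset.sum_int_mod, Finset.sum_int_mod S 2 (degF G F)]
    congr 1
    exact Finset.sum_congr rfl fun w _ => hp w
  have h2 : (∑ w ∈ S, degF G F w) = ∑ e ∈ F,
      ((if (G.ends e).1 ∈ S then (1:ℤ) else 0) + (if (G.ends e).2 ∈ S then (1:ℤ) else 0)) := by
    unfold degF inc
    rw [Finset.sum_comm]
    refine Finset.sum_congr rfl fun e _ => ?_
    rw [Finset.sum_add_distrib, Finset.sum_ite_eq, Finset.sum_ite_eq]
  rw [h1, h2, cutF, card_filter_int, Finset.sum_int_mod, Finset.sum_int_mod F 2]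
  congr 1
  refine Finset.sum_congr rfl fun e _ => ?_
  by_cases ha : (G.ends e).1 ∈ S <;> by_cases hb : (G.ends e).2 ∈ S <;> simp [ha, hb]

/-- Submodularity with a crossing edge. -/
lemma submod (F : Finset G.E) (e : G.E) (he : e ∈ F) (u v : G.V)
    (hends : G.ends e = (u, v) ∨ G.ends e = (v, u))
    (S T : Finset G.V) (huS : u ∈ S) (hvS : v ∉ S) (hvT : v ∈ T) (huT : u ∉ T) :
    (cutF G F (S ∩ T)).card + (cutF G F (S ∪ T)).card + 2 ≤
      (cutF G F S).card + (cutF G F T).card := by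
  classical
  have h12 : ((G.ends e).1 = u ∧ (G.ends e).2 = v) ∨ ((G.ends e).1 = v ∧ (G.ends e).2 = u) := by
    rcases hends with h | h
    · exact Or.inl ⟨by rw [h], by rw [h]⟩
    · exact Or.inr ⟨by rw [h], by rw [h]⟩
  have hcard : ∀ X : Finset G.V, (cutF G F X).card = ∑ f ∈ F,
      (if ((G.ends f).1 ∈ X ∧ (G.ends f).2 ∉ X) ∨ ((G.ends f).2 ∈ X ∧ (G.ends f).1 ∉ X)
        then 1 else 0) := by
    intro X
    rw [cutF, Finset.card_filter]
  have hsplit : ∀ X : Finset G.V, (cutF G F X).card =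
      (if ((G.ends e).1 ∈ X ∧ (G.ends e).2 ∉ X) ∨ ((G.ends e).2 ∈ X ∧ (G.ends e).1 ∉ X)
        then 1 else 0)
      + ∑ f ∈ F.erase e,
        (if ((G.ends f).1 ∈ X ∧ (G.ends f).2 ∉ X) ∨ ((G.ends f).2 ∈ X ∧ (G.ends f).1 ∉ X)
          then 1 else 0) := by
    intro X
    rw [hcard X, ← Finset.add_sum_erase _ _ he]
  have heS : (if ((G.ends e).1 ∈ S ∧ (G.ends e).2 ∉ S) ∨ ((G.ends e).2 ∈ S ∧ (G.ends e).1 ∉ S)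
      then 1 else 0) = 1 := by
    rcases h12 with ⟨ha, hb⟩ | ⟨ha, hb⟩ <;> rw [ha, hb] <;> simp [huS, hvS, hvT, huT]
  have heT : (if ((G.ends e).1 ∈ T ∧ (G.ends e).2 ∉ T) ∨ ((G.ends e).2 ∈ T ∧ (G.ends e).1 ∉ T)
      then 1 else 0) = 1 := by
    rcases h12 with ⟨ha, hb⟩ | ⟨ha, hb⟩ <;> rw [ha, hb] <;> simp [huS, hvS, hvT, huT]
  have heI : (if ((G.ends e).1 ∈ S ∩ T ∧ (G.ends e).2 ∉ S ∩ T) ∨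
      ((G.ends e).2 ∈ S ∩ T ∧ (G.ends e).1 ∉ S ∩ T) then 1 else 0) = 0 := by
    rcases h12 with ⟨ha, hb⟩ | ⟨ha, hb⟩ <;> rw [ha, hb] <;>
      simp [Finset.mem_inter, huS, hvS, hvT, huT]
  have heU : (if ((G.ends e).1 ∈ S ∪ T ∧ (G.ends e).2 ∉ S ∪ T) ∨
      ((G.ends e).2 ∈ S ∪ T ∧ (G.ends e).1 ∉ S ∪ T) then 1 else 0) = 0 := by
    rcases h12 with ⟨ha, hb⟩ | ⟨ha, hb⟩ <;> rw [ha, hb] <;>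
      simp [Finset.mem_union, huS, hvS, hvT, huT]
  have hmono : (∑ f ∈ F.erase e,
        (if ((G.ends f).1 ∈ S ∩ T ∧ (G.ends f).2 ∉ S ∩ T) ∨
          ((G.ends f).2 ∈ S ∩ T ∧ (G.ends f).1 ∉ S ∩ T) then 1 else 0))
      + (∑ f ∈ F.erase e,
        (if ((G.ends f).1 ∈ S ∪ T ∧ (G.ends f).2 ∉ S ∪ T) ∨
          ((G.ends f).2 ∈ S ∪ T ∧ (G.ends f).1 ∉ S ∪ T) then 1 else 0))
      ≤ (∑ f ∈ F.erase e,
        (if ((G.ends f).1 ∈ S ∧ (G.ends f).2 ∉ S) ∨ ((G.ends f).2 ∈ S ∧ (G.ends f).1 ∉ S)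
          then 1 else 0))
      + (∑ f ∈ F.erase e,
        (if ((G.ends f).1 ∈ T ∧ (G.ends f).2 ∉ T) ∨ ((G.ends f).2 ∈ T ∧ (G.ends f).1 ∉ T)
          then 1 else 0)) := by
    rw [← Finset.sum_add_distrib, ← Finset.sum_add_distrib]
    refine Finset.sum_le_sum fun f _ => ?_
    by_cases ha : (G.ends f).1 ∈ S <;> by_cases hb : (G.ends f).2 ∈ S <;>
      by_cases hx : (G.ends f).1 ∈ T <;> by_cases hy : (G.ends f).2 ∈ T <;>
      simp [ha, hb, hx, hy, Finset.mem_inter, Finset.mem_union]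
  rw [hsplit S, hsplit T, hsplit (S ∩ T), hsplit (S ∪ T), heS, heT, heI, heU]
  omega

/-- No two conflicting tight sets. -/
lemma uncross (F : Finset G.E) (e : G.E) (he : e ∈ F) (u v : G.V)
    (hends : G.ends e = (u, v) ∨ G.ends e = (v, u)) (ℓ : G.V → ℤ)
    (hc : ∀ S, |∑ w ∈ S, ℓ w| ≤ ((cutF G F S).card : ℤ))
    (S T : Finset G.V) (huS : u ∈ S) (hvS : v ∉ S) (hvT : v ∈ T) (huT : u ∉ T)
    (hS : ∑ w ∈ S, ℓ w = -((cutF G F S).card : ℤ))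
    (hT : ∑ w ∈ T, ℓ w = -((cutF G F T).card : ℤ)) : False := by
  have hsub := submod G F e he u v hends S T huS hvS hvT huT
  have h1 := (abs_le.mp (hc (S ∩ T))).1
  have h2 := (abs_le.mp (hc (S ∪ T))).1
  have h3 : ((∑ w ∈ S ∪ T, ℓ w) + ∑ w ∈ S ∩ T, ℓ w) = (∑ w ∈ S, ℓ w) + ∑ w ∈ T, ℓ w :=
    Finset.sum_union_inter
  have hsub' : ((cutF G F (S ∩ T)).card : ℤ) + ((cutF G F (S ∪ T)).card : ℤ) + 2 ≤
      ((cutF G F S).card : ℤ) + ((cutF G F T).card : ℤ) := by exact_mod_cast hsub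
  linarith

/-- The inductive step: deleting a safely orientable edge preserves the hypotheses. -/
lemma step (F : Finset G.E) (e : G.E) (he : e ∈ F) (u v : G.V)
    (hends : G.ends e = (u, v) ∨ G.ends e = (v, u)) (huv : u ≠ v)
    (ℓ : G.V → ℤ) (hs : (∑ w, ℓ w) = 0) (hp : ∀ w, ℓ w % 2 = degF G F w % 2)
    (hc : ∀ S, |∑ w ∈ S, ℓ w| ≤ ((cutF G F S).card : ℤ))
    (hnt : ∀ S : Finset G.V, u ∈ S → v ∉ S → (∑ w ∈ S, ℓ w) ≠ -((cutF G F S).card : ℤ)) :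
    ((∑ w, (ℓ w - (if u = w then 1 else 0) + (if v = w then 1 else 0))) = 0) ∧
    (∀ w, (ℓ w - (if u = w then 1 else 0) + (if v = w then 1 else 0)) % 2
        = degF G (F.erase e) w % 2) ∧
    (∀ S, |∑ w ∈ S, (ℓ w - (if u = w then 1 else 0) + (if v = w then 1 else 0))|
        ≤ ((cutF G (F.erase e) S).card : ℤ)) := by
  classical
  have h12 : ((G.ends e).1 = u ∧ (G.ends e).2 = v) ∨ ((G.ends e).1 = v ∧ (G.ends e).2 = u) := by
    rcases hends with h | h
    · exact Or.inl ⟨by rw [h], by rw [h]⟩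
    · exact Or.inr ⟨by rw [h], by rw [h]⟩
  have hinc : ∀ w, inc G e w = (if u = w then 1 else 0) + (if v = w then 1 else 0) := by
    intro w
    rcases h12 with ⟨ha, hb⟩ | ⟨ha, hb⟩ <;> rw [inc, ha, hb] <;> ring
  have hecut : ∀ X : Finset G.V, ((u ∈ X ∧ v ∉ X) ∨ (v ∈ X ∧ u ∉ X)) → e ∈ cutF G F X := by
    intro X hX
    rw [cutF, Finset.mem_filter]
    rcases h12 with ⟨ha, hb⟩ | ⟨ha, hb⟩ <;> rw [ha, hb] <;> exact ⟨he, by tauto⟩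
  have hecut' : ∀ X : Finset G.V, (u ∈ X ↔ v ∈ X) → e ∉ cutF G F X := by
    intro X hX hmem
    rw [cutF, Finset.mem_filter] at hmem
    rcases h12 with ⟨ha, hb⟩ | ⟨ha, hb⟩ <;> rw [ha, hb] at hmem <;> tauto
  have hcerase : ∀ X : Finset G.V, cutF G (F.erase e) X = (cutF G F X).erase e := by
    intro X
    rw [cutF, cutF, Finset.filter_erase]
  have hsumX : ∀ X : Finset G.V,
      (∑ w ∈ X, (ℓ w - (if u = w then 1 else 0) + (if v = w then 1 else 0)))
      = (∑ w ∈ X, ℓ w) - (if u ∈ X then 1 else 0) + (if v ∈ X then 1 else 0) := by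
    intro X
    rw [Finset.sum_add_distrib, Finset.sum_sub_distrib, Finset.sum_ite_eq, Finset.sum_ite_eq]
  refine ⟨?_, ?_, ?_⟩
  · have := hsumX Finset.univ
    simp only [Finset.mem_univ, if_true] at this
    rw [this, hs]
    ring
  · intro w
    have hd : degF G (F.erase e) w = degF G F w - inc G e w := by
      unfold degF
      rw [Finset.sum_erase_eq_sub he]
    rw [hd, hinc w]
    have hpw := hp w
    by_cases h1 : u = w
    · have h2 : ¬ v = w := fun h => huv (h1.trans h.symm)
      simp only [h1, h2, if_true, if_pos rfl, if_neg h2]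
      omega
    · by_cases h2 : v = w
      · simp only [h2, if_neg h1, if_pos rfl]
        omega
      · simp only [if_neg h1, if_neg h2]
        omega
  · intro S
    rw [hsumX S, hcerase S]
    have hpar := cut_parity G F ℓ hp S
    have habs := abs_le.mp (hc S)
    by_cases hu : u ∈ S
    · by_cases hv : v ∈ S
      · -- e not in the cut; nothing changes
        rw [Finset.erase_eq_of_notMem (hecut' S (by tauto))]
        simp only [hu, hv, if_true]
        have : (∑ w ∈ S, ℓ w) - 1 + 1 = ∑ w ∈ S, ℓ w := by ring
        rw [this]
        exact hc S
      · -- u ∈ S, v ∉ S : tight-low excluded by hnt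
        have hmem : e ∈ cutF G F S := hecut S (Or.inl ⟨hu, hv⟩)
        have hone : 1 ≤ (cutF G F S).card := Finset.card_pos.mpr ⟨e, hmem⟩
        rw [Finset.card_erase_of_mem hmem]
        have hne := hnt S hu hv
        simp only [hu, hv, if_true, if_false]
        rw [abs_le]
        push_cast [Nat.cast_sub hone]
        constructor <;> omega
    · by_cases hv : v ∈ S
      · -- v ∈ S, u ∉ S : tight-high excluded via complement
        have hmem : e ∈ cutF G F S := hecut S (Or.inr ⟨hv, hu⟩)
        have hone : 1 ≤ (cutF G F S).card := Finset.card_pos.mpr ⟨e, hmem⟩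
        rw [Finset.card_erase_of_mem hmem]
        have hcc : cutF G F Sᶜ = cutF G F S := by
          rw [cutF, cutF]
          refine Finset.filter_congr fun f _ => ?_
          simp only [Finset.mem_compl]
          tauto
        have hcsum : (∑ w ∈ Sᶜ, ℓ w) = -(∑ w ∈ S, ℓ w) := by
          have := Finset.sum_compl_add_sum S ℓ
          rw [hs] at this
          linarith
        have hne' := hnt Sᶜ (Finset.mem_compl.mpr hu) (by simp [Finset.mem_compl, hv])
        rw [hcc, hcsum] at hne'
        simp only [hu, hv, if_true, if_false]
        rw [abs_le]
        push_cast [Nat.cast_sub hone]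
        constructor <;> omega
      · rw [Finset.erase_eq_of_notMem (hecut' S (by tauto))]
        simp only [hu, hv, if_false]
        have : (∑ w ∈ S, ℓ w) - 0 + 0 = ∑ w ∈ S, ℓ w := by ring
        rw [this]
        exact hc S

/-- Main induction. -/
lemma main (n : ℕ) : ∀ (F : Finset G.E), F.card = n → ∀ (ℓ : G.V → ℤ),
    (∑ w, ℓ w) = 0 → (∀ w, ℓ w % 2 = degF G F w % 2) →
    (∀ S, |∑ w ∈ S, ℓ w| ≤ ((cutF G F S).card : ℤ)) →
    ∃ D : G.E → Bool, ∀ w, netF G F D w = ℓ w := by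
  induction n with
  | zero =>
    intro F hF ℓ hs hp hc
    have hF0 : F = ∅ := Finset.card_eq_zero.mp hF
    subst hF0
    refine ⟨fun _ => true, fun w => ?_⟩
    have h1 := hc {w}
    rw [Finset.sum_singleton] at h1
    have h2 : cutF G (∅ : Finset G.E) {w} = ∅ := by rw [cutF, Finset.filter_empty]
    rw [h2] at h1
    simp only [Finset.card_empty, Nat.cast_zero] at h1
    have h3 : ℓ w = 0 := abs_nonpos_iff.mp h1
    rw [netF, Finset.sum_empty, h3]
  | succ n ih =>
    intro F hF ℓ hs hp hc
    have hne : F.Nonempty := by rw [← Finset.card_pos, hF]; omega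
    obtain ⟨e, he⟩ := hne
    have huv : (G.ends e).1 ≠ (G.ends e).2 := G.loopless e
    have hcard : (F.erase e).card = n := by rw [Finset.card_erase_of_mem he, hF]; omega
    by_cases hB : ∃ S : Finset G.V, (G.ends e).1 ∈ S ∧ (G.ends e).2 ∉ S ∧
        (∑ w ∈ S, ℓ w) = -((cutF G F S).card : ℤ)
    · -- orient e from second end to first end
      have hnt : ∀ T : Finset G.V, (G.ends e).2 ∈ T → (G.ends e).1 ∉ T →
          (∑ w ∈ T, ℓ w) ≠ -((cutF G F T).card : ℤ) := by
        obtain ⟨S, huS, hvS, hS⟩ := hB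
        intro T hvT huT hT
        exact uncross G F e he (G.ends e).1 (G.ends e).2 (Or.inl rfl) ℓ hc
          S T huS hvS hvT huT hS hT
      obtain ⟨h0, hpar', hcut'⟩ := step G F e he (G.ends e).2 (G.ends e).1
        (Or.inr rfl) huv.symm ℓ hs hp hc hnt
      obtain ⟨D', hD'⟩ := ih (F.erase e) hcard _ h0 hpar' hcut'
      refine ⟨Function.update D' e false, fun w => ?_⟩
      have hnet : netF G F (Function.update D' e false) w
          = oinc G (Function.update D' e false) e w
            + netF G (F.erase e) (Function.update D' e false) w :=
        (Finset.add_sum_erase _ _ he).symm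
      have h2 : netF G (F.erase e) (Function.update D' e false) w
          = netF G (F.erase e) D' w := by
        refine Finset.sum_congr rfl fun f hf => ?_
        have hfe : f ≠ e := Finset.ne_of_mem_erase hf
        have ht : G.tail (Function.update D' e false) f = G.tail D' f := by
          simp only [Multigraph.tail, Function.update_of_ne hfe]
        have hh : G.head (Function.update D' e false) f = G.head D' f := by
          simp only [Multigraph.head, Function.update_of_ne hfe]
        rw [oinc, oinc, ht, hh]
      have h3 : oinc G (Function.update D' e false) e w
          = (if (G.ends e).2 = w then 1 else 0) - (if (G.ends e).1 = w then 1 else 0) := by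
        simp [oinc, Multigraph.tail, Multigraph.head, Function.update_self]
      rw [hnet, h2, hD' w, h3]
      ring
    · have hnt : ∀ S : Finset G.V, (G.ends e).1 ∈ S → (G.ends e).2 ∉ S →
          (∑ w ∈ S, ℓ w) ≠ -((cutF G F S).card : ℤ) := by
        intro S hu hv hS
        exact hB ⟨S, hu, hv, hS⟩
      obtain ⟨h0, hpar', hcut'⟩ := step G F e he (G.ends e).1 (G.ends e).2
        (Or.inl rfl) huv ℓ hs hp hc hnt
      obtain ⟨D', hD'⟩ := ih (F.erase e) hcard _ h0 hpar' hcut'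
      refine ⟨Function.update D' e true, fun w => ?_⟩
      have hnet : netF G F (Function.update D' e true) w
          = oinc G (Function.update D' e true) e w
            + netF G (F.erase e) (Function.update D' e true) w :=
        (Finset.add_sum_erase _ _ he).symm
      have h2 : netF G (F.erase e) (Function.update D' e true) w
          = netF G (F.erase e) D' w := by
        refine Finset.sum_congr rfl fun f hf => ?_
        have hfe : f ≠ e := Finset.ne_of_mem_erase hf
        have ht : G.tail (Function.update D' e true) f = G.tail D' f := by
          simp only [Multigraph.tail, Function.update_of_ne hfe]
        have hh : G.head (Function.update D' e true) f = G.head D' f := by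
          simp only [Multigraph.head, Function.update_of_ne hfe]
        rw [oinc, oinc, ht, hh]
      have h3 : oinc G (Function.update D' e true) e w
          = (if (G.ends e).1 = w then 1 else 0) - (if (G.ends e).2 = w then 1 else 0) := by
        simp [oinc, Multigraph.tail, Multigraph.head, Function.update_self]
      rw [hnet, h2, hD' w, h3]
      ring

end HakimiAux

/-- Hakimi's orientation theorem. -/
theorem hakimi_orientation (G : Multigraph) (l : G.V → ℤ)
    (hsum : (∑ v, l v) = 0) (hpar : ∀ v, l v ≡ (G.degree v : ℤ) [ZMOD 2]) :
    (∃ D : G.E → Bool, ∀ v, (G.outDeg D v : ℤ) - (G.inDeg D v : ℤ) = l v) ↔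
      (∀ S : Finset G.V, |∑ v ∈ S, l v| ≤ ((G.cut S).card : ℤ)) := by
  classical
  have hcut_eq : ∀ S : Finset G.V, G.cut S = HakimiAux.cutF G Finset.univ S := fun S => rfl
  have hnet : ∀ (D : G.E → Bool) (w : G.V),
      HakimiAux.netF G Finset.univ D w = (G.outDeg D w : ℤ) - (G.inDeg D w : ℤ) := by
    intro D w
    unfold HakimiAux.netF HakimiAux.oinc Multigraph.outDeg Multigraph.inDeg
    rw [Finset.sum_sub_distrib, HakimiAux.card_filter_int, HakimiAux.card_filter_int]
  have hdeg : ∀ w, HakimiAux.degF G Finset.univ w = (G.degree w : ℤ) := by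
    intro w
    unfold HakimiAux.degF HakimiAux.inc Multigraph.degree
    rw [HakimiAux.card_filter_int]
    refine Finset.sum_congr rfl fun e _ => ?_
    by_cases h1 : (G.ends e).1 = w
    · have h2 : ¬ (G.ends e).2 = w := fun h => G.loopless e (h1.trans h.symm)
      simp [h1, h2]
    · by_cases h2 : (G.ends e).2 = w <;> simp [h1, h2]
  have hp : ∀ w, l w % 2 = HakimiAux.degF G Finset.univ w % 2 := by
    intro w
    rw [hdeg w]
    exact hpar w
  constructor
  · rintro ⟨D, hD⟩ S
    have h1 : (∑ v ∈ S, l v) = ∑ w ∈ S, HakimiAux.netF G Finset.univ D w :=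
      Finset.sum_congr rfl fun w _ => by rw [hnet D w, hD w]
    rw [h1, hcut_eq]
    exact HakimiAux.forward_bound G Finset.univ D S
  · intro hC
    obtain ⟨D, hD⟩ := HakimiAux.main G (Finset.univ : Finset G.E).card Finset.univ rfl l
      hsum hp (fun S => by rw [← hcut_eq]; exact hC S)
    exact ⟨D, fun w => by rw [← hD w, hnet D w]⟩
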